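/- Let n > −1 and ν > −(n+1)/2. Then for all x > 0, ∫_0^x I_{ν+n}(t)/t^ν dt > I_{ν+n+1}(x)/x^ν. Moreover, if ν = −(n+1)/2 then equality holds: ∫_0^x I_{ν+n}(t)/t^ν dt = I_{ν+n+1}(x)/x^ν for all x > 0. -/

import Mathlib

open MeasureTheory Set Real Filter

/-- Modified Bessel function of the first kind:
`I_ν(x) = Σ_{k=0}^∞ (x/2)^{ν+2k} / (k! Γ(ν+k+1))`. -/
noncomputable def besselI (ν x : ℝ) : ℝ :=
  ∑' k : ℕ, (x / 2) ^ (ν + 2 * (k : ℝ)) / ((Nat.factorial k : ℝ) * Real.Gamma (ν + (k : ℝ) + 1))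


lemma gammaT_pos (μ x : ℝ) (hμ : 0 < μ + 1) (hx : 0 < x) (k : ℕ) :
    0 < (x/2) ^ (μ + 2*(k:ℝ)) / ((Nat.factorial k : ℝ) * Real.Gamma (μ + (k:ℝ) + 1)) := by
  have hk : (0:ℝ) ≤ k := Nat.cast_nonneg k
  apply div_pos (rpow_pos_of_pos (by linarith) _)
  exact mul_pos (by positivity) (Real.Gamma_pos_of_pos (by linarith))

lemma summable_T (μ x : ℝ) (hμ : 0 < μ + 1) (hx : 0 < x) :
    Summable (fun k : ℕ => (x/2) ^ (μ + 2*(k:ℝ)) / ((Nat.factorial k : ℝ) * Real.Gamma (μ + (k:ℝ) + 1))) := by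
  set f : ℕ → ℝ := fun k => (x/2) ^ (μ + 2*(k:ℝ)) / ((Nat.factorial k : ℝ) * Real.Gamma (μ + (k:ℝ) + 1)) with hf
  have hpos : ∀ k, 0 < f k := gammaT_pos μ x hμ hx
  apply summable_of_ratio_test_tendsto_lt_one (l := 0) one_pos
    (Filter.Eventually.of_forall fun k => (hpos k).ne')
  have key : ∀ k : ℕ, ‖f (k+1)‖ / ‖f k‖ = (x/2)^(2:ℝ) / (((k:ℝ)+1) * (μ + k + 1)) := by
    intro k
    have hk : (0:ℝ) ≤ k := Nat.cast_nonneg k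
    rw [Real.norm_of_nonneg (hpos _).le, Real.norm_of_nonneg (hpos _).le]
    have step : f (k+1) = f k * ((x/2)^(2:ℝ) / (((k:ℝ)+1) * (μ + k + 1))) := by
      have h1 : (x/2) ^ (μ + 2*(((k:ℕ):ℝ)+1)) = (x/2) ^ (μ + 2*(k:ℝ)) * (x/2)^(2:ℝ) := by
        rw [← Real.rpow_add (by linarith)]; ring_nf
      have h2 : Real.Gamma (μ + ((k:ℝ)+1) + 1) = (μ + (k:ℝ) + 1) * Real.Gamma (μ + (k:ℝ) + 1) := by
        have h : μ + ((k:ℝ)+1) + 1 = (μ + (k:ℝ) + 1) + 1 := by ring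
        rw [h, Real.Gamma_add_one (by linarith)]
      have h3 : (Nat.factorial (k+1) : ℝ) = ((k:ℝ)+1) * Nat.factorial k := by
        push_cast [Nat.factorial_succ]; ring
      have hΓ : Real.Gamma (μ + (k:ℝ) + 1) ≠ 0 := (Real.Gamma_pos_of_pos (by linarith)).ne'
      have hfa : (Nat.factorial k : ℝ) ≠ 0 := by positivity
      have hk1 : ((k:ℝ)+1) ≠ 0 := by positivity
      have hm : (μ + (k:ℝ) + 1) ≠ 0 := by linarith
      simp only [hf, Nat.cast_add, Nat.cast_one, h1, h2, h3]
      field_simp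
    rw [step, mul_comm, mul_div_assoc, div_self (hpos k).ne', mul_one]
  simp only [key]
  have : Tendsto (fun k : ℕ => ((k:ℝ)+1) * (μ + k + 1)) atTop atTop := by
    apply Filter.Tendsto.atTop_mul_atTop₀
    · exact tendsto_atTop_add_const_right _ _ tendsto_natCast_atTop_atTop
    · have h := tendsto_atTop_add_const_right atTop (μ + 1) tendsto_natCast_atTop_atTop
      apply h.congr; intro k; ring
  exact Tendsto.div_atTop tendsto_const_nhds this

lemma lhs_eq (ν n x : ℝ) (hn : -1 < n) (hμ : 0 < ν + n + 1) (hx : 0 < x) :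
    (∫ t in (0:ℝ)..x, besselI (ν + n) t / t ^ ν)
      = ∑' k : ℕ, (x^(1-ν)/(n + 2*(k:ℝ) + 1)) *
          ((x/2) ^ (ν + n + 2*(k:ℝ)) / ((Nat.factorial k : ℝ) * Real.Gamma (ν + n + (k:ℝ) + 1))) := by
  have hk0 : ∀ k : ℕ, (0:ℝ) ≤ k := fun k => Nat.cast_nonneg k
  set T : ℕ → ℝ := fun k => (x/2) ^ (ν + n + 2*(k:ℝ)) / ((Nat.factorial k : ℝ) * Real.Gamma (ν + n + (k:ℝ) + 1)) with hT
  set C : ℕ → ℝ := fun k => (2:ℝ) ^ (-(ν + n + 2*(k:ℝ))) / ((Nat.factorial k : ℝ) * Real.Gamma (ν + n + (k:ℝ) + 1)) with hC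
  set F : ℕ → ℝ → ℝ := fun k t => C k * t ^ (n + 2*(k:ℝ)) with hF
  have hCpos : ∀ k, 0 < C k := by
    intro k
    apply div_pos (rpow_pos_of_pos two_pos _)
    exact mul_pos (by positivity) (Real.Gamma_pos_of_pos (by have := hk0 k; linarith))
  have hexp : ∀ k : ℕ, (-1:ℝ) < n + 2*(k:ℝ) := fun k => by have := hk0 k; linarith
  have hint : ∀ k, IntegrableOn (F k) (Ioc 0 x) volume := by
    intro k
    have h1 : IntervalIntegrable (fun t : ℝ => t ^ (n + 2*(k:ℝ))) volume 0 x :=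
      intervalIntegral.intervalIntegrable_rpow' (hexp k)
    have h2 := (intervalIntegrable_iff_integrableOn_Ioc_of_le hx.le).mp h1
    exact h2.const_mul _
  have hval : ∀ k, (∫ t in Ioc (0:ℝ) x, F k t) =
      (x^(1-ν)/(n + 2*(k:ℝ) + 1)) * T k := by
    intro k
    rw [← intervalIntegral.integral_of_le hx.le]
    have h1 : (∫ t in (0:ℝ)..x, F k t) = C k * ∫ t in (0:ℝ)..x, t ^ (n + 2*(k:ℝ)) := by
      simp only [hF]; exact intervalIntegral.integral_const_mul _ _
    rw [h1, integral_rpow (Or.inl (hexp k)),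
      Real.zero_rpow (by have := hk0 k; linarith : n + 2*(k:ℝ) + 1 ≠ 0)]
    have key : (2:ℝ) ^ (-(ν + n + 2*(k:ℝ))) * x ^ (n + 2*(k:ℝ) + 1)
        = x^(1-ν) * (x/2) ^ (ν + n + 2*(k:ℝ)) := by
      rw [Real.div_rpow hx.le (by norm_num : (0:ℝ) ≤ 2), Real.rpow_neg (by norm_num : (0:ℝ) ≤ 2)]
      rw [div_eq_mul_inv]
      rw [← mul_assoc]
      rw [← Real.rpow_add hx]
      have h : (1:ℝ) - ν + (ν + n + 2*(k:ℝ)) = n + 2*(k:ℝ) + 1 := by ring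
      rw [h, mul_comm]
    have hΓ : ((Nat.factorial k : ℝ) * Real.Gamma (ν + n + (k:ℝ) + 1)) ≠ 0 := by
      exact (mul_pos (by positivity) (Real.Gamma_pos_of_pos (by have := hk0 k; linarith))).ne'
    simp only [hC, hT, sub_zero]
    rw [div_mul_div_comm, div_mul_div_comm, key, mul_comm (n + 2*(k:ℝ) + 1)]
  have hTpos : ∀ k : ℕ, 0 < T k := by
    intro k
    apply div_pos (rpow_pos_of_pos (by linarith) _)
    exact mul_pos (by positivity) (Real.Gamma_pos_of_pos (by have := hk0 k; linarith))
  have hTsummable : Summable T := by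
    have := summable_T (ν + n) x (by linarith) hx
    exact this.congr fun k => rfl
  have hFnonneg : ∀ k, ∀ t ∈ Ioc (0:ℝ) x, 0 ≤ F k t := fun k t ht =>
    mul_nonneg (hCpos k).le (Real.rpow_nonneg ht.1.le _)
  have hnorm : ∀ k, (∫ t in Ioc (0:ℝ) x, ‖F k t‖) = (x^(1-ν)/(n + 2*(k:ℝ) + 1)) * T k := by
    intro k
    rw [setIntegral_congr_fun measurableSet_Ioc
      (fun t ht => Real.norm_of_nonneg (hFnonneg k t ht)), hval k]
  have hA_sum : Summable (fun k : ℕ => (x^(1-ν)/(n + 2*(k:ℝ) + 1)) * T k) := by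
    refine Summable.of_nonneg_of_le ?_ ?_ (hTsummable.mul_left (x^(1-ν)/(n+1)))
    · intro k
      have := hk0 k
      exact mul_nonneg (div_nonneg (rpow_nonneg hx.le _) (by linarith)) (hTpos k).le
    · intro k
      have := hk0 k
      apply mul_le_mul_of_nonneg_right _ (hTpos k).le
      apply div_le_div_of_nonneg_left (rpow_nonneg hx.le _) (by linarith) (by linarith)
  have hsum : Summable (fun k => ∫ t in Ioc (0:ℝ) x, ‖F k t‖) :=
    hA_sum.congr fun k => (hnorm k).symm
  have hswap := MeasureTheory.integral_tsum_of_summable_integral_norm (fun k => hint k) hsum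
  rw [intervalIntegral.integral_of_le hx.le]
  have hpt : EqOn (fun t => besselI (ν+n) t / t ^ ν) (fun t => ∑' k, F k t) (Ioc 0 x) := by
    intro t ht
    have ht0 : 0 < t := ht.1
    simp only [besselI]
    rw [← tsum_div_const]
    apply tsum_congr
    intro k
    have h1 : t ^ (ν + n + 2*(k:ℝ)) = t ^ ν * t ^ (n + 2*(k:ℝ)) := by
      rw [← Real.rpow_add ht0]; ring_nf
    have hΓk : ((Nat.factorial k : ℝ) * Real.Gamma (ν + n + (k:ℝ) + 1)) ≠ 0 :=
      (mul_pos (by positivity) (Real.Gamma_pos_of_pos (by have := hk0 k; linarith))).ne'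
    have h2e : ((2:ℝ) ^ (ν + n + 2*(k:ℝ))) ≠ 0 := (rpow_pos_of_pos two_pos _).ne'
    have htν : t ^ ν ≠ 0 := (rpow_pos_of_pos ht0 _).ne'
    have htn : (0:ℝ) < t ^ (n + 2*(k:ℝ)) := rpow_pos_of_pos ht0 _
    simp only [hF, hC]
    rw [Real.div_rpow ht0.le (by norm_num : (0:ℝ) ≤ 2), h1,
      Real.rpow_neg (by norm_num : (0:ℝ) ≤ 2)]
    field_simp
  rw [setIntegral_congr_fun measurableSet_Ioc hpt, ← hswap]
  exact tsum_congr hval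

lemma rhs_eq (ν n x : ℝ) (hμ : 0 < ν + n + 1) (hx : 0 < x) :
    besselI (ν + n + 1) x / x ^ ν
      = ∑' k : ℕ, (x^(1-ν)/(2*(ν + n + (k:ℝ) + 1))) *
          ((x/2) ^ (ν + n + 2*(k:ℝ)) / ((Nat.factorial k : ℝ) * Real.Gamma (ν + n + (k:ℝ) + 1))) := by
  simp only [besselI]
  rw [← tsum_div_const]
  apply tsum_congr
  intro k
  have hk : (0:ℝ) ≤ k := Nat.cast_nonneg k
  have hm : (0:ℝ) < ν + n + (k:ℝ) + 1 := by linarith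
  have h2 : Real.Gamma (ν + n + 1 + (k:ℝ) + 1) = (ν + n + (k:ℝ) + 1) * Real.Gamma (ν + n + (k:ℝ) + 1) := by
    rw [show ν + n + 1 + (k:ℝ) + 1 = (ν + n + (k:ℝ) + 1) + 1 by ring, Real.Gamma_add_one hm.ne']
  have h1 : (x/2) ^ (ν + n + 1 + 2*(k:ℝ)) = (x/2) ^ (ν + n + 2*(k:ℝ)) * (x/2) := by
    rw [show ν + n + 1 + 2*(k:ℝ) = (ν + n + 2*(k:ℝ)) + 1 by ring,
      Real.rpow_add_one (by positivity)]
  have hx1ν : x^(1-ν) = x / x^ν := by rw [Real.rpow_sub hx, Real.rpow_one]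
  have hΓ : Real.Gamma (ν + n + (k:ℝ) + 1) ≠ 0 := (Real.Gamma_pos_of_pos hm).ne'
  have hfa : (Nat.factorial k : ℝ) ≠ 0 := by positivity
  have hxν : x ^ ν ≠ 0 := (rpow_pos_of_pos hx _).ne'
  rw [h1, h2, hx1ν]
  field_simp

theorem stmt_10 (ν n : ℝ) (hn : n > -1) :
    (ν > -(n + 1) / 2 → ∀ x : ℝ, 0 < x →
      (∫ t in (0 : ℝ)..x, besselI (ν + n) t / t ^ ν) > besselI (ν + n + 1) x / x ^ ν) ∧
    (ν = -(n + 1) / 2 → ∀ x : ℝ, 0 < x →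
      (∫ t in (0 : ℝ)..x, besselI (ν + n) t / t ^ ν) = besselI (ν + n + 1) x / x ^ ν) := by
  constructor
  · intro hν x hx
    have h2ν : 0 < 2*ν + n + 1 := by linarith
    have hμ : 0 < ν + n + 1 := by linarith
    rw [gt_iff_lt, rhs_eq ν n x hμ hx, lhs_eq ν n x hn hμ hx]
    set T : ℕ → ℝ := fun k => (x/2) ^ (ν + n + 2*(k:ℝ)) / ((Nat.factorial k : ℝ) * Real.Gamma (ν + n + (k:ℝ) + 1)) with hT
    have hTpos : ∀ k : ℕ, 0 < T k := by
      intro k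
      have hk : (0:ℝ) ≤ k := Nat.cast_nonneg k
      exact div_pos (rpow_pos_of_pos (by linarith) _)
        (mul_pos (by positivity) (Real.Gamma_pos_of_pos (by linarith)))
    have hxp : 0 < x^(1-ν) := rpow_pos_of_pos hx _
    have hTsummable : Summable T := summable_T (ν + n) x (by linarith) hx
    apply Summable.tsum_lt_tsum_of_nonneg (i := 0)
    · intro k
      have hk : (0:ℝ) ≤ k := Nat.cast_nonneg k
      exact mul_nonneg (div_nonneg hxp.le (by linarith)) (hTpos k).le
    · intro k
      have hk : (0:ℝ) ≤ k := Nat.cast_nonneg k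
      apply mul_le_mul_of_nonneg_right _ (hTpos k).le
      exact div_le_div_of_nonneg_left hxp.le (by linarith) (by linarith)
    · apply mul_lt_mul_of_pos_right _ (hTpos 0)
      apply div_lt_div_of_pos_left hxp
      · push_cast; linarith
      · push_cast; linarith
    · refine Summable.of_nonneg_of_le ?_ ?_ (hTsummable.mul_left (x^(1-ν)/(n+1)))
      · intro k
        have hk : (0:ℝ) ≤ k := Nat.cast_nonneg k
        exact mul_nonneg (div_nonneg hxp.le (by linarith)) (hTpos k).le
      · intro k
        have hk : (0:ℝ) ≤ k := Nat.cast_nonneg k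
        apply mul_le_mul_of_nonneg_right _ (hTpos k).le
        exact div_le_div_of_nonneg_left hxp.le (by linarith) (by linarith)
  · intro hν x hx
    have hμ : 0 < ν + n + 1 := by rw [hν] at *; linarith
    rw [rhs_eq ν n x hμ hx, lhs_eq ν n x hn hμ hx]
    apply tsum_congr
    intro k
    have hd : n + 2*(k:ℝ) + 1 = 2*(ν + n + (k:ℝ) + 1) := by rw [hν]; ring
    rw [hd]
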